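/- arXiv:2307.00962 — 2 statements merged into one kernel-verified Lean document; each statement's English description precedes it below -/
import Mathlib

section
/- Let U_el be an elastic quantum walk satisfying (A-1), and let (y,j) ∈ ℤ² × {←,→,↓,↑}. Then: (1) the trajectory Φ(·,y,j) is closed if and only if it is bounded; (2) |q(t,y,j)| → ∞ as t → +∞ if and only if |q(t,y,j)| → ∞ as t → −∞. -/
noncomputable section

namespace QWPaper

open Complex

/-- Sites of the two-dimensional lattice. -/
abbrev Site : Type := ℤ × ℤ

/-- Chirality indices: `0 = ←`, `1 = →`, `2 = ↓`, `3 = ↑`. -/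
abbrev Chir : Type := Fin 4

abbrev V : Type := EuclideanSpace ℂ (Fin 4)

/-- The Hilbert space `H = ℓ²(ℤ²; ℂ⁴)`. -/
abbrev H : Type := lp (fun _ : Site => V) 2

/-- The inner domain `Ω^i = {x : |x₁| ≤ M₀, |x₂| ≤ M₀}`. -/
def innerDom (M₀ : ℤ) : Set Site := {x | |x.1| ≤ M₀ ∧ |x.2| ≤ M₀}

/-- `S` is the shift operator:
`(Su)(x) = (u_←(x+e₁), u_→(x−e₁), u_↓(x+e₂), u_↑(x−e₂))`. -/
def IsShiftOp (S : H →L[ℂ] H) : Prop :=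
  ∀ (u : H) (x : Site),
    (S u) x 0 = u (x.1 + 1, x.2) 0 ∧
    (S u) x 1 = u (x.1 - 1, x.2) 1 ∧
    (S u) x 2 = u (x.1, x.2 + 1) 2 ∧
    (S u) x 3 = u (x.1, x.2 - 1) 3

/-- `A` is the bounded operator of pointwise multiplication by the matrix family `C`. -/
def IsCoinOp (A : H →L[ℂ] H) (C : Site → Matrix Chir Chir ℂ) : Prop :=
  ∀ (u : H) (x : Site) (i : Chir), (A u) x i = ∑ j : Chir, C x i j * u x j

/-- Every coin matrix is unitary. -/
def IsUnitaryCoin (C : Site → Matrix Chir Chir ℂ) : Prop :=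
  ∀ x, C x ∈ Matrix.unitaryGroup Chir ℂ

/-- Assumption (A-1): `C(x) = I₄` off `Ω^i`, with `M₀ ≥ 1`. -/
def SatisfiesA1 (C : Site → Matrix Chir Chir ℂ) (M₀ : ℤ) : Prop :=
  1 ≤ M₀ ∧ ∀ x, x ∉ innerDom M₀ → C x = 1

/-- `D_x(θ) = diag(e^{iθx₁}, e^{−iθx₁}, e^{iθx₂}, e^{−iθx₂})`. -/
def Dmat (θ : ℂ) (x : Site) : Matrix Chir Chir ℂ :=
  Matrix.diagonal ![Complex.exp (Complex.I * θ * x.1), Complex.exp (-(Complex.I * θ * x.1)),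
    Complex.exp (Complex.I * θ * x.2), Complex.exp (-(Complex.I * θ * x.2))]

/-- The translated coin `D_x(θ) C(x) D_x(θ)⁻¹`. -/
def transCoin (θ : ℂ) (C : Site → Matrix Chir Chir ℂ) (x : Site) : Matrix Chir Chir ℂ :=
  Dmat θ x * C x * (Dmat θ x)⁻¹

/-- The complex translated walk `U(θ) = e^{−iθ} S M(θ)`. -/
def transWalkOp (θ : ℂ) (S Mθ : H →L[ℂ] H) : H →L[ℂ] H :=
  Complex.exp (-(Complex.I * θ)) • (S.comp Mθ)

/-- `⟨x⟩ = (1 + |x|²)^{1/2}`. -/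
def jnorm (x : Site) : ℝ := Real.sqrt (1 + ((x.1 : ℝ) ^ 2 + (x.2 : ℝ) ^ 2))

/-- Super-exponentially decreasing elements of `H`: `e^{τ⟨x⟩} f ∈ H` for every `τ > 0`. -/
def SuperExpDecay (f : H) : Prop :=
  ∀ τ : ℝ, 0 < τ → Memℓp (fun x : Site => (Real.exp (τ * jnorm x) • f x : V)) 2

/-- Pointwise shift of an arbitrary `ℂ⁴`-valued map on `ℤ²`. -/
def ptShift (v : Site → Chir → ℂ) (x : Site) : Chir → ℂ :=
  ![v (x.1 + 1, x.2) 0, v (x.1 - 1, x.2) 1, v (x.1, x.2 + 1) 2, v (x.1, x.2 - 1) 3]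

/-- Pointwise coin action on an arbitrary `ℂ⁴`-valued map on `ℤ²`. -/
def ptCoin (C : Site → Matrix Chir Chir ℂ) (u : Site → Chir → ℂ) (x : Site) (i : Chir) : ℂ :=
  ∑ j : Chir, C x i j * u x j

/-- Pointwise action of the walk `U = SC` on arbitrary `ℂ⁴`-valued maps. -/
def ptWalk (C : Site → Matrix Chir Chir ℂ) (u : Site → Chir → ℂ) : Site → Chir → ℂ :=
  ptShift (ptCoin C u)

/-- `u` is a pointwise solution of `U u = e^{−iκ} u`. -/
def IsPtSolution (C : Site → Matrix Chir Chir ℂ) (κ : ℂ) (u : Site → Chir → ℂ) : Prop :=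
  ∀ (x : Site) (i : Chir), ptWalk C u x i = Complex.exp (-(Complex.I * κ)) * u x i

/-- `u` is outgoing with the explicit sequences `aL aR aD aU`. -/
def IsOutgoingWith (M₀ : ℤ) (κ : ℂ) (aL aR aD aU : ℤ → ℂ) (u : Site → Chir → ℂ) : Prop :=
  (∀ x : Site, x.1 < -M₀ → u x 0 = aL x.2 * Complex.exp (-(Complex.I * κ * x.1))) ∧
  (∀ x : Site, M₀ < x.1 → u x 0 = 0) ∧
  (∀ x : Site, x.1 < -M₀ → u x 1 = 0) ∧
  (∀ x : Site, M₀ < x.1 → u x 1 = aR x.2 * Complex.exp (Complex.I * κ * x.1)) ∧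
  (∀ x : Site, x.2 < -M₀ → u x 2 = aD x.1 * Complex.exp (-(Complex.I * κ * x.2))) ∧
  (∀ x : Site, M₀ < x.2 → u x 2 = 0) ∧
  (∀ x : Site, x.2 < -M₀ → u x 3 = 0) ∧
  (∀ x : Site, M₀ < x.2 → u x 3 = aU x.1 * Complex.exp (Complex.I * κ * x.2))

/-- `u` is an outgoing map. -/
def IsOutgoing (M₀ : ℤ) (κ : ℂ) (u : Site → Chir → ℂ) : Prop :=
  ∃ aL aR aD aU : ℤ → ℂ, IsOutgoingWith M₀ κ aL aR aD aU u

/-- Elastic coin: column `j` of `C_el(x)` is `e^{iα_j(x)} 𝐞_{σ(x)(j)}`. -/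
def elasticCoin (σ : Site → Equiv.Perm Chir) (α : Site → Chir → ℝ) (x : Site) :
    Matrix Chir Chir ℂ :=
  Matrix.of fun i j => if i = σ x j then Complex.exp (Complex.I * (α x j : ℂ)) else 0

/-- The initial state `δ_y 𝐞_j ∈ H`. -/
def deltaState (y : Site) (j : Chir) : H := lp.single 2 y (EuclideanSpace.single j 1)

/-- `(q, p)` is the trajectory map of the elastic walk `Uel`:
`Uel^t (δ_y 𝐞_j)` is a modulus-one multiple of `δ_{q(t,y,j)} 𝐞_{p(t,y,j)}`. -/
def IsTrajectory (Uel : unitary (H →L[ℂ] H))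
    (q : ℤ → Site → Chir → Site) (p : ℤ → Site → Chir → Chir) : Prop :=
  (∀ y j, q 0 y j = y ∧ p 0 y j = j) ∧
  ∀ (t : ℤ) (y : Site) (j : Chir), ∃ c : ℂ, ‖c‖ = 1 ∧
    ((Uel ^ t : unitary (H →L[ℂ] H)) : H →L[ℂ] H) (deltaState y j)
      = c • deltaState (q t y j) (p t y j)

/-- Euclidean norm of a lattice point. -/
def znorm (x : Site) : ℝ := Real.sqrt ((x.1 : ℝ) ^ 2 + (x.2 : ℝ) ^ 2)

/-- The parts of the barrier `K`. -/
def K1p (M₀ : ℤ) : Set Site := {x | x.1 = M₀ ∧ |x.2| ≤ M₀}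
def K1m (M₀ : ℤ) : Set Site := {x | x.1 = -M₀ ∧ |x.2| ≤ M₀}
def K2p (M₀ : ℤ) : Set Site := {x | x.2 = M₀ ∧ |x.1| ≤ M₀}
def K2m (M₀ : ℤ) : Set Site := {x | x.2 = -M₀ ∧ |x.1| ≤ M₀}
def Kbar (M₀ : ℤ) : Set Site := K1p M₀ ∪ K1m M₀ ∪ K2p M₀ ∪ K2m M₀

/-- The exterior domain `Ω^e = (ℤ² \ Ω^i) ∪ K`. -/
def outerDom (M₀ : ℤ) : Set Site := {x | x ∉ innerDom M₀} ∪ Kbar M₀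

/-- Membership in the interior space `H_i`. -/
def memHi (M₀ : ℤ) (u : H) : Prop :=
  (∀ x, x ∉ innerDom M₀ → ∀ i : Chir, u x i = 0) ∧
  (∀ x ∈ K1p M₀, u x 0 = 0) ∧ (∀ x ∈ K1m M₀, u x 1 = 0) ∧
  (∀ x ∈ K2p M₀, u x 2 = 0) ∧ (∀ x ∈ K2m M₀, u x 3 = 0)

/-- Membership in the exterior space `H_e`. -/
def memHe (M₀ : ℤ) (u : H) : Prop :=
  (∀ x, x ∉ outerDom M₀ → ∀ i : Chir, u x i = 0) ∧
  (∀ x ∈ K1m M₀ ∪ K2p M₀ ∪ K2m M₀, u x 0 = 0) ∧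
  (∀ x ∈ K1p M₀ ∪ K2p M₀ ∪ K2m M₀, u x 1 = 0) ∧
  (∀ x ∈ K2m M₀ ∪ K1p M₀ ∪ K1m M₀, u x 2 = 0) ∧
  (∀ x ∈ K2p M₀ ∪ K1p M₀ ∪ K1m M₀, u x 3 = 0)

/-- The non-penetrable barrier conditions for `U_np`. -/
def IsBarrierWalk (M₀ : ℤ) (Unp : H →L[ℂ] H) : Prop :=
  ∀ u : H,
    (∀ x ∈ K1p M₀, (Unp u) (x.1 + 1, x.2) 1 = u x 0) ∧
    (∀ x ∈ K1m M₀, (Unp u) (x.1 - 1, x.2) 0 = u x 0) ∧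
    (∀ x ∈ K2p M₀, (Unp u) (x.1, x.2 + 1) 3 = u x 2) ∧
    (∀ x ∈ K2m M₀, (Unp u) (x.1, x.2 - 1) 2 = u x 3)

/-- The rectangular loop `L_{ε,s}(μ)` (boundary of the rectangle with half-widths `a`, `b`). -/
def loopSet (μ a b : ℝ) : Set ℂ :=
  {κ | |κ.re - μ| ≤ a ∧ |κ.im| ≤ b ∧ (|κ.re - μ| = a ∨ |κ.im| = b)}

/-- The four-corner elastic coin. -/
def fourCornerCoin (m₀ n₀ : ℤ) (x : Site) : Matrix Chir Chir ℂ :=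
  if x = ((0 : ℤ), (0 : ℤ)) then !![0,1,0,0; 0,0,1,0; 0,0,0,1; 1,0,0,0]
  else if x = (m₀, (0 : ℤ)) then !![0,0,1,0; 1,0,0,0; 0,0,0,1; 0,1,0,0]
  else if x = (m₀, n₀) then !![0,0,0,1; 1,0,0,0; 0,1,0,0; 0,0,1,0]
  else if x = ((0 : ℤ), n₀) then !![0,1,0,0; 0,0,0,1; 1,0,0,0; 0,0,1,0]
  else 1

/-- The four corners. -/
def corners (m₀ n₀ : ℤ) : Set Site :=
  {((0 : ℤ), (0 : ℤ)), (m₀, (0 : ℤ)), (m₀, n₀), ((0 : ℤ), n₀)}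

/-- A perturbed four-corner coin `C_ε`. -/
def IsPerturbedFourCorner (m₀ n₀ : ℤ) (ε : ℝ) (Cε : Site → Matrix Chir Chir ℂ) : Prop :=
  IsUnitaryCoin Cε ∧
  (∀ x, x ∉ corners m₀ n₀ → Cε x = 1) ∧
  (∀ x ∈ corners m₀ n₀, ∀ i j : Chir, ‖Cε x i j - fourCornerCoin m₀ n₀ x i j‖ < ε) ∧
  Cε ((0 : ℤ), (0 : ℤ)) 1 0 = 0 ∧ Cε ((0 : ℤ), (0 : ℤ)) 3 2 = 0 ∧
  Cε (m₀, (0 : ℤ)) 3 2 = 0 ∧ Cε (m₀, (0 : ℤ)) 0 1 = 0 ∧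
  Cε (m₀, n₀) 2 3 = 0 ∧ Cε (m₀, n₀) 0 1 = 0 ∧
  Cε ((0 : ℤ), n₀) 1 0 = 0 ∧ Cε ((0 : ℤ), n₀) 2 3 = 0

/-- `c_ε⁺ = c_{↑,←}(0,0) c_{←,↓}(m₀,0) c_{↓,→}(m₀,n₀) c_{→,↑}(0,n₀)`. -/
def cPlus (m₀ n₀ : ℤ) (Cε : Site → Matrix Chir Chir ℂ) : ℂ :=
  Cε ((0 : ℤ), (0 : ℤ)) 3 0 * Cε (m₀, (0 : ℤ)) 0 2 * Cε (m₀, n₀) 2 1 * Cε ((0 : ℤ), n₀) 1 3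

/-- `c_ε⁻ = c_{→,↓}(0,0) c_{↑,→}(m₀,0) c_{←,↑}(m₀,n₀) c_{↓,←}(0,n₀)`. -/
def cMinus (m₀ n₀ : ℤ) (Cε : Site → Matrix Chir Chir ℂ) : ℂ :=
  Cε ((0 : ℤ), (0 : ℤ)) 1 2 * Cε (m₀, (0 : ℤ)) 3 1 * Cε (m₀, n₀) 0 3 * Cε ((0 : ℤ), n₀) 2 0

/-- `u ∈ H` is supported on the set `A ⊆ ℤ² × {←,→,↓,↑}`. -/
def SupportedOn (u : H) (A : Set (Site × Chir)) : Prop :=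
  ∀ (x : Site) (i : Chir), (x, i) ∉ A → u x i = 0

/-- The image of the closed trajectory `Φ₊` of the four-corner walk. -/
def imPhiPlus (m₀ n₀ : ℤ) : Set (Site × Chir) :=
  {w | ∃ t : ℤ, 1 ≤ t ∧ t ≤ n₀ ∧ w = (((0 : ℤ), t), (3 : Chir))} ∪
  {w | ∃ t : ℤ, 1 ≤ t ∧ t ≤ m₀ ∧ w = ((t, n₀), (1 : Chir))} ∪
  {w | ∃ t : ℤ, 0 ≤ t ∧ t ≤ n₀ - 1 ∧ w = ((m₀, t), (2 : Chir))} ∪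
  {w | ∃ t : ℤ, 0 ≤ t ∧ t ≤ m₀ - 1 ∧ w = ((t, (0 : ℤ)), (0 : Chir))}

/-- The image of the reversed closed trajectory `Φ₋` of the four-corner walk. -/
def imPhiMinus (m₀ n₀ : ℤ) : Set (Site × Chir) :=
  {w | ∃ t : ℤ, 1 ≤ t ∧ t ≤ m₀ ∧ w = ((t, (0 : ℤ)), (1 : Chir))} ∪
  {w | ∃ t : ℤ, 1 ≤ t ∧ t ≤ n₀ ∧ w = ((m₀, t), (3 : Chir))} ∪
  {w | ∃ t : ℤ, 0 ≤ t ∧ t ≤ m₀ - 1 ∧ w = ((t, n₀), (0 : Chir))} ∪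
  {w | ∃ t : ℤ, 0 ≤ t ∧ t ≤ n₀ - 1 ∧ w = (((0 : ℤ), t), (2 : Chir))}

/-- The eight outgoing tails starting from the four corners. -/
def tails (m₀ n₀ : ℤ) : Set (Site × Chir) :=
  {w | ∃ N y₂ : ℤ, 1 ≤ N ∧ (y₂ = 0 ∨ y₂ = n₀) ∧ w = ((-N, y₂), (0 : Chir))} ∪
  {w | ∃ N y₁ : ℤ, 1 ≤ N ∧ (y₁ = 0 ∨ y₁ = m₀) ∧ w = ((y₁, n₀ + N), (3 : Chir))} ∪
  {w | ∃ N y₁ : ℤ, 1 ≤ N ∧ (y₁ = 0 ∨ y₁ = m₀) ∧ w = ((y₁, -N), (2 : Chir))} ∪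
  {w | ∃ N y₂ : ℤ, 1 ≤ N ∧ (y₂ = 0 ∨ y₂ = n₀) ∧ w = ((m₀ + N, y₂), (1 : Chir))}

/-- The shape resonance perturbation `C_ε` of the barrier coin `C_np`. -/
def IsShapePerturbation (M₀ : ℤ) (Cnp : Site → Matrix Chir Chir ℂ) (ε : ℝ)
    (Cε : Site → Matrix Chir Chir ℂ) : Prop :=
  IsUnitaryCoin Cε ∧ (∀ x, x ∉ Kbar M₀ → Cε x = Cnp x) ∧
  (∀ x ∈ Kbar M₀, ∀ i j : Chir, ‖Cε x i j - Cnp x i j‖ < ε)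

/-- Counterclockwise contour integral of an operator-valued map over the boundary of the
rectangle centered at `μ ∈ ℝ` with half-widths `a` and `b`. -/
def rectIntegral (f : ℂ → (H →L[ℂ] H)) (μ a b : ℝ) : H →L[ℂ] H :=
  ((∫ t in (μ - a)..(μ + a), f (t - b * Complex.I)) -
      (∫ t in (μ - a)..(μ + a), f (t + b * Complex.I))) +
  Complex.I • ((∫ s in (-b)..b, f ((μ + a : ℝ) + s * Complex.I)) -
      (∫ s in (-b)..b, f ((μ - a : ℝ) + s * Complex.I)))

/-- The Riesz-type projection `(1/2π) ∮ e^{−iκ} (A − e^{−iκ})^{−1} dκ` over the rectangular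
loop of half-widths `a`, `b` around `μ`. -/
def rieszProj (A : H →L[ℂ] H) (μ a b : ℝ) : H →L[ℂ] H :=
  (1 / (2 * Real.pi)) •
    rectIntegral (fun κ => Complex.exp (-(Complex.I * κ)) •
      Ring.inverse (A - Complex.exp (-(Complex.I * κ)) • (1 : H →L[ℂ] H))) μ a b


/-! ### Auxiliary lemmas for the trajectory theorem -/

lemma deltaState_apply (y : Site) (j : Chir) (x : Site) (i : Chir) :
    deltaState y j x i = if x = y ∧ i = j then 1 else 0 := by
  unfold deltaState
  rcases eq_or_ne x y with h | h
  · subst h; rw [lp.single_apply_self]; simp [EuclideanSpace.single_apply]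
  · rw [lp.single_apply_ne 2 y _ h]; simp [h]

/-- Unit displacement associated to each chirality. -/
def dvec : Chir → Site := ![(-1,0),(1,0),(0,-1),(0,1)]

/-- The one-step classical map of an elastic walk. -/
def Fstep (σ : Site → Equiv.Perm Chir) (w : Site × Chir) : Site × Chir :=
  (w.1 + dvec (σ w.1 w.2), σ w.1 w.2)

lemma walk_delta (σ : Site → Equiv.Perm Chir) (α : Site → Chir → ℝ)
    (S Cop : H →L[ℂ] H) (hS : IsShiftOp S) (hCop : IsCoinOp Cop (elasticCoin σ α))
    (y : Site) (k : Chir) :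
    (S.comp Cop) (deltaState y k) =
      Complex.exp (Complex.I * (α y k : ℂ)) • deltaState (y + dvec (σ y k)) (σ y k) := by
  apply lp.ext
  funext x
  have hval : ∀ (w : Site) (i : Chir),
      (Cop (deltaState y k)) w i = if w = y ∧ i = σ y k then Complex.exp (Complex.I * (α y k : ℂ)) else 0 := by
    intro w i
    rw [hCop]
    rw [Finset.sum_eq_single k]
    · simp only [deltaState_apply, and_true, elasticCoin, Matrix.of_apply]
      by_cases hw : w = y
      · subst hw; simp
      · simp [hw]
    · intro b _ hb; simp [deltaState_apply, hb]
    · simp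
  have hRHS : ∀ i : Chir, (Complex.exp (Complex.I * (α y k : ℂ)) • deltaState (y + dvec (σ y k)) (σ y k) : H) x i
        = Complex.exp (Complex.I * (α y k : ℂ)) * (if x = y + dvec (σ y k) ∧ i = σ y k then 1 else 0) := by
    intro i
    rw [lp.coeFn_smul, Pi.smul_apply]
    have : ((Complex.exp (Complex.I * (α y k : ℂ)) • (deltaState (y + dvec (σ y k)) (σ y k) x : V)) : V) i
        = Complex.exp (Complex.I * (α y k : ℂ)) * (deltaState (y + dvec (σ y k)) (σ y k) x i) := rfl
    rw [this, deltaState_apply]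
  have hs := hS (Cop (deltaState y k)) x
  have c0 : (S (Cop (deltaState y k))) x 0 =
      Complex.exp (Complex.I * (α y k : ℂ)) * (if x = y + dvec (σ y k) ∧ (0:Chir) = σ y k then 1 else 0) := by
    rw [hs.1, hval]
    by_cases hm : σ y k = (0 : Chir)
    · have hd : dvec (σ y k) = ((-1 : ℤ), (0:ℤ)) := by rw [hm]; rfl
      rw [hd]
      by_cases hx : ((x.1 + 1 : ℤ), x.2) = y
      · have hxy : x = y + ((-1 : ℤ), (0:ℤ)) := by
          rw [← hx]; ext : 1 <;> simp
        simp [hx, hxy, hm]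
      · have hxy : x ≠ y + ((-1 : ℤ), (0:ℤ)) := by
          intro h; apply hx; rw [h]; ext : 1 <;> simp
        simp [hx, hxy, hm]
    · simp [Ne.symm hm, hm]
  have c1 : (S (Cop (deltaState y k))) x 1 =
      Complex.exp (Complex.I * (α y k : ℂ)) * (if x = y + dvec (σ y k) ∧ (1:Chir) = σ y k then 1 else 0) := by
    rw [hs.2.1, hval]
    by_cases hm : σ y k = (1 : Chir)
    · have hd : dvec (σ y k) = ((1 : ℤ), (0:ℤ)) := by rw [hm]; rfl
      rw [hd]
      by_cases hx : ((x.1 - 1 : ℤ), x.2) = y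
      · have hxy : x = y + ((1 : ℤ), (0:ℤ)) := by
          rw [← hx]; ext : 1 <;> simp
        simp [hx, hxy, hm]
      · have hxy : x ≠ y + ((1 : ℤ), (0:ℤ)) := by
          intro h; apply hx; rw [h]; ext : 1 <;> simp
        simp [hx, hxy, hm]
    · simp [Ne.symm hm, hm]
  have c2 : (S (Cop (deltaState y k))) x 2 =
      Complex.exp (Complex.I * (α y k : ℂ)) * (if x = y + dvec (σ y k) ∧ (2:Chir) = σ y k then 1 else 0) := by
    rw [hs.2.2.1, hval]
    by_cases hm : σ y k = (2 : Chir)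
    · have hd : dvec (σ y k) = ((0 : ℤ), (-1:ℤ)) := by rw [hm]; rfl
      rw [hd]
      by_cases hx : ((x.1 : ℤ), (x.2 + 1 : ℤ)) = y
      · have hxy : x = y + ((0 : ℤ), (-1:ℤ)) := by
          rw [← hx]; ext : 1 <;> simp
        simp [hx, hxy, hm]
      · have hxy : x ≠ y + ((0 : ℤ), (-1:ℤ)) := by
          intro h; apply hx; rw [h]; ext : 1 <;> simp
        simp [hx, hxy, hm]
    · simp [Ne.symm hm, hm]
  have c3 : (S (Cop (deltaState y k))) x 3 =
      Complex.exp (Complex.I * (α y k : ℂ)) * (if x = y + dvec (σ y k) ∧ (3:Chir) = σ y k then 1 else 0) := by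
    rw [hs.2.2.2, hval]
    by_cases hm : σ y k = (3 : Chir)
    · have hd : dvec (σ y k) = ((0 : ℤ), (1:ℤ)) := by rw [hm]; rfl
      rw [hd]
      by_cases hx : ((x.1 : ℤ), (x.2 - 1 : ℤ)) = y
      · have hxy : x = y + ((0 : ℤ), (1:ℤ)) := by
          rw [← hx]; ext : 1 <;> simp
        simp [hx, hxy, hm]
      · have hxy : x ≠ y + ((0 : ℤ), (1:ℤ)) := by
          intro h; apply hx; rw [h]; ext : 1 <;> simp
        simp [hx, hxy, hm]
    · simp [Ne.symm hm, hm]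
  ext i
  rw [hRHS i]
  show (S (Cop (deltaState y k))) x i = _
  fin_cases i
  · exact c0
  · exact c1
  · exact c2
  · exact c3

lemma delta_smul_inj {a b : ℂ} {w w' : Site} {k k' : Chir} (ha : a ≠ 0)
    (h : a • deltaState w k = b • deltaState w' k') : w = w' ∧ k = k' := by
  have h1 : (a • deltaState w k : H) w k = (b • deltaState w' k' : H) w k := by rw [h]
  simp only [lp.coeFn_smul, Pi.smul_apply, PiLp.smul_apply, smul_eq_mul, deltaState_apply] at h1
  by_contra hc
  simp [hc] at h1
  exact ha h1

lemma sigma_free {M₀ : ℤ} {σ : Site → Equiv.Perm Chir} {α : Site → Chir → ℝ}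
    (hA1 : ∀ x, x ∉ innerDom M₀ → elasticCoin σ α x = 1)
    {x : Site} (hx : x ∉ innerDom M₀) (k : Chir) : σ x k = k := by
  have h := hA1 x hx
  by_contra hne
  have h1 : elasticCoin σ α x (σ x k) k = (1 : Matrix Chir Chir ℂ) (σ x k) k := by rw [h]
  simp only [elasticCoin, Matrix.of_apply, if_pos rfl, Matrix.one_apply, hne] at h1
  simp only [if_true, if_false] at h1
  exact Complex.exp_ne_zero _ h1

lemma step_lemma (σ : Site → Equiv.Perm Chir) (α : Site → Chir → ℝ)
    (S Cop : H →L[ℂ] H) (hS : IsShiftOp S) (hCop : IsCoinOp Cop (elasticCoin σ α))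
    (Uel : unitary (H →L[ℂ] H)) (hUel : (Uel : H →L[ℂ] H) = S.comp Cop)
    (q : ℤ → Site → Chir → Site) (p : ℤ → Site → Chir → Chir)
    (htraj : IsTrajectory Uel q p) (y : Site) (j : Chir) (t : ℤ) :
    q (t+1) y j = q t y j + dvec (σ (q t y j) (p t y j)) ∧
      p (t+1) y j = σ (q t y j) (p t y j) := by
  obtain ⟨c, hc, heq⟩ := htraj.2 t y j
  obtain ⟨c', hc', heq'⟩ := htraj.2 (t+1) y j
  have hp : (Uel ^ (t+1) : unitary (H →L[ℂ] H)) = Uel * Uel ^ t := by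
    rw [add_comm, zpow_add, zpow_one]
  have happ : ((Uel ^ (t+1) : unitary (H →L[ℂ] H)) : H →L[ℂ] H) (deltaState y j)
      = (Uel : H →L[ℂ] H) (((Uel ^ t : unitary (H →L[ℂ] H)) : H →L[ℂ] H) (deltaState y j)) := by
    rw [hp]; rfl
  rw [heq, map_smul, hUel, walk_delta σ α S Cop hS hCop] at happ
  rw [heq', smul_smul] at happ
  have hne : c' ≠ 0 := by intro h; rw [h] at hc'; simp at hc'
  have := delta_smul_inj hne happ
  exact ⟨this.1, this.2⟩

lemma Fstep_inj (σ : Site → Equiv.Perm Chir) : Function.Injective (Fstep σ) := by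
  rintro ⟨x, k⟩ ⟨x', k'⟩ h
  simp only [Fstep, Prod.mk.injEq] at h
  obtain ⟨h1, h2⟩ := h
  rw [h2] at h1
  have hx : x = x' := add_right_cancel h1
  subst hx
  have : k = k' := (σ x).injective h2
  simp [this]

lemma abs_fst_le_znorm (x : Site) : |(x.1 : ℝ)| ≤ znorm x := by
  rw [znorm, ← Real.sqrt_sq_eq_abs]
  apply Real.sqrt_le_sqrt; nlinarith [sq_nonneg (x.2:ℝ)]

lemma abs_snd_le_znorm (x : Site) : |(x.2 : ℝ)| ≤ znorm x := by
  rw [znorm, ← Real.sqrt_sq_eq_abs]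
  apply Real.sqrt_le_sqrt; nlinarith [sq_nonneg (x.1:ℝ)]

lemma znorm_add_dvec (a : Site) (k : Chir) (m : ℤ) :
    |(m:ℝ)| - znorm a ≤ znorm (a + m • dvec k) := by
  have h1 := abs_fst_le_znorm a
  have h2 := abs_snd_le_znorm a
  fin_cases k
  · show |(m:ℝ)| - znorm a ≤ znorm (a + m • dvec (0:Chir))
    have hd : a + m • dvec (0:Chir) = (a.1 - m, a.2) := by
      show a + m • ((-1,0) : Site) = _
      have : m • ((-1,0) : Site) = (-m, 0) := by
        rw [Prod.smul_def]; simp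
      rw [this]; ext <;> simp <;> ring
    rw [hd]
    have := abs_fst_le_znorm (a.1 - m, a.2)
    have habs : |(m:ℝ)| - |(a.1:ℝ)| ≤ |((a.1 - m : ℤ):ℝ)| := by
      push_cast
      rw [abs_sub_comm]
      have := abs_sub_abs_le_abs_sub (m:ℝ) (a.1:ℝ)
      linarith
    simp only [Prod.fst] at this
    linarith
  · show |(m:ℝ)| - znorm a ≤ znorm (a + m • dvec (1:Chir))
    have hd : a + m • dvec (1:Chir) = (a.1 + m, a.2) := by
      show a + m • ((1,0) : Site) = _
      have : m • ((1,0) : Site) = (m, 0) := by rw [Prod.smul_def]; simp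
      rw [this]; ext <;> simp
    rw [hd]
    have := abs_fst_le_znorm (a.1 + m, a.2)
    have habs : |(m:ℝ)| - |(a.1:ℝ)| ≤ |((a.1 + m : ℤ):ℝ)| := by
      push_cast
      have h := abs_add_le ((a.1:ℝ) + m) (-(a.1:ℝ))
      simp only [add_neg_cancel_comm, abs_neg] at h
      linarith
    simp only [Prod.fst] at this
    linarith
  · show |(m:ℝ)| - znorm a ≤ znorm (a + m • dvec (2:Chir))
    have hd : a + m • dvec (2:Chir) = (a.1, a.2 - m) := by
      show a + m • ((0,-1) : Site) = _
      have : m • ((0,-1) : Site) = (0, -m) := by rw [Prod.smul_def]; simp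
      rw [this]; ext <;> simp <;> ring
    rw [hd]
    have := abs_snd_le_znorm (a.1, a.2 - m)
    have habs : |(m:ℝ)| - |(a.2:ℝ)| ≤ |((a.2 - m : ℤ):ℝ)| := by
      push_cast
      rw [abs_sub_comm]
      have := abs_sub_abs_le_abs_sub (m:ℝ) (a.2:ℝ)
      linarith
    simp only [Prod.snd] at this
    linarith
  · show |(m:ℝ)| - znorm a ≤ znorm (a + m • dvec (3:Chir))
    have hd : a + m • dvec (3:Chir) = (a.1, a.2 + m) := by
      show a + m • ((0,1) : Site) = _
      have : m • ((0,1) : Site) = (0, m) := by rw [Prod.smul_def]; simp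
      rw [this]; ext <;> simp
    rw [hd]
    have := abs_snd_le_znorm (a.1, a.2 + m)
    have habs : |(m:ℝ)| - |(a.2:ℝ)| ≤ |((a.2 + m : ℤ):ℝ)| := by
      push_cast
      have h := abs_add_le ((a.2:ℝ) + m) (-(a.2:ℝ))
      simp only [add_neg_cancel_comm, abs_neg] at h
      linarith
    simp only [Prod.snd] at this
    linarith

section core
variable {σ : Site → Equiv.Perm Chir} {Φ : ℤ → Site × Chir}

lemma shift_eq (hstep : ∀ t, Φ (t+1) = Fstep σ (Φ t)) {t₁ t₂ : ℤ} (h : Φ t₁ = Φ t₂) :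
    ∀ s : ℤ, Φ (t₁ + s) = Φ (t₂ + s) := by
  intro s
  induction s using Int.induction_on with
  | zero => simpa using h
  | succ n ih =>
    have h1 : t₁ + (n+1 : ℤ) = (t₁ + n) + 1 := by ring
    have h2 : t₂ + (n+1 : ℤ) = (t₂ + n) + 1 := by ring
    rw [h1, h2, hstep, hstep, ih]
  | pred n ih =>
    have h1 : t₁ + (-n : ℤ) = (t₁ + (-(n+1))) + 1 := by ring
    have h2 : t₂ + (-n : ℤ) = (t₂ + (-(n+1))) + 1 := by ring
    rw [h1, h2, hstep, hstep] at ih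
    have h3 : t₁ + (-(n:ℤ)-1) = t₁ + (-((n:ℤ)+1)) := by ring
    have h4 : t₂ + (-(n:ℤ)-1) = t₂ + (-((n:ℤ)+1)) := by ring
    rw [h3, h4]
    exact Fstep_inj σ ih

lemma periodic_of_closed (hstep : ∀ t, Φ (t+1) = Fstep σ (Φ t)) {t₁ t₂ : ℤ}
    (hlt : t₁ < t₂) (h : Φ t₁ = Φ t₂) :
    ∀ t k : ℤ, Φ (t + (t₂ - t₁) * k) = Φ t := by
  have hper : ∀ t : ℤ, Φ (t + (t₂ - t₁)) = Φ t := by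
    intro t
    have := shift_eq hstep h (t - t₁)
    have e1 : t₁ + (t - t₁) = t := by ring
    have e2 : t₂ + (t - t₁) = t + (t₂ - t₁) := by ring
    rw [e1, e2] at this
    exact this.symm
  intro t k
  induction k using Int.induction_on with
  | zero => simp
  | succ n ih =>
    have e : t + (t₂ - t₁) * (n+1) = (t + (t₂ - t₁) * n) + (t₂ - t₁) := by ring
    rw [e, hper, ih]
  | pred n ih =>
    have e : t + (t₂ - t₁) * (-(n:ℤ)-1) + (t₂ - t₁) = t + (t₂ - t₁) * (-n) := by ring
    rw [← ih, ← e, hper]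

lemma bounded_of_closed (hstep : ∀ t, Φ (t+1) = Fstep σ (Φ t)) {t₁ t₂ : ℤ}
    (hlt : t₁ < t₂) (h : Φ t₁ = Φ t₂) : ∃ ρ : ℝ, ∀ t : ℤ, znorm (Φ t).1 ≤ ρ := by
  have hTpos : 0 < t₂ - t₁ := by omega
  have hne : (Finset.Icc (0:ℤ) (t₂ - t₁ - 1)).Nonempty := ⟨0, by simp; omega⟩
  refine ⟨(Finset.Icc (0:ℤ) (t₂ - t₁ - 1)).sup' hne (fun r => znorm (Φ (t₁ + r)).1), ?_⟩
  intro t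
  have hmod : Φ t = Φ (t₁ + (t - t₁) % (t₂ - t₁)) := by
    have := periodic_of_closed hstep hlt h (t₁ + (t - t₁) % (t₂ - t₁)) ((t - t₁) / (t₂ - t₁))
    rw [← this]
    congr 1
    have := Int.emod_add_mul_ediv (t - t₁) (t₂ - t₁)
    omega
  rw [hmod]
  refine Finset.le_sup' (fun r => znorm (Φ (t₁ + r)).1) ?_
  simp only [Finset.mem_Icc]
  constructor
  · exact Int.emod_nonneg _ (by omega)
  · have := Int.emod_lt_of_pos (t - t₁) hTpos; omega

lemma closed_of_bounded (hbd : ∃ ρ : ℝ, ∀ t : ℤ, znorm (Φ t).1 ≤ ρ) :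
    ∃ t₁ t₂ : ℤ, t₁ < t₂ ∧ Φ t₁ = Φ t₂ := by
  obtain ⟨ρ, hρ⟩ := hbd
  have hsub : Set.range Φ ⊆
      ↑(((Finset.Icc (-⌈ρ⌉) ⌈ρ⌉ ×ˢ Finset.Icc (-⌈ρ⌉) ⌈ρ⌉)) ×ˢ (Finset.univ : Finset Chir)) := by
    rintro w ⟨t, rfl⟩
    simp only [Finset.coe_product, Set.mem_prod, Finset.mem_coe, Finset.mem_Icc, Finset.mem_univ,
      and_true]
    have h1 := (abs_fst_le_znorm (Φ t).1).trans (hρ t)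
    have h2 := (abs_snd_le_znorm (Φ t).1).trans (hρ t)
    have hc := Int.le_ceil ρ
    have b1 : |((Φ t).1.1 : ℝ)| ≤ (⌈ρ⌉ : ℝ) := h1.trans hc
    have b2 : |((Φ t).1.2 : ℝ)| ≤ (⌈ρ⌉ : ℝ) := h2.trans hc
    rw [abs_le] at b1 b2
    constructor
    · constructor <;> [exact_mod_cast b1.1; exact_mod_cast b1.2]
    · constructor <;> [exact_mod_cast b2.1; exact_mod_cast b2.2]
  have hfin : (Set.range Φ).Finite := Set.Finite.subset (Finset.finite_toSet _) hsub
  have : ¬ Function.Injective Φ := by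
    intro hinj
    exact (Set.infinite_range_of_injective hinj) hfin
  rw [Function.not_injective_iff] at this
  obtain ⟨a, b, hab, hne⟩ := this
  rcases lt_or_gt_of_ne hne with h | h
  · exact ⟨a, b, h, hab⟩
  · exact ⟨b, a, h, hab.symm⟩

lemma tendsto_of_injective (M₀ : ℤ)
    (hfree : ∀ x, x ∉ innerDom M₀ → ∀ k, σ x k = k)
    (hstep : ∀ t, Φ (t+1) = Fstep σ (Φ t))
    (hinj : Function.Injective Φ) :
    Filter.Tendsto (fun t : ℤ => znorm (Φ t).1) Filter.atTop Filter.atTop ∧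
    Filter.Tendsto (fun t : ℤ => znorm (Φ t).1) Filter.atBot Filter.atTop := by
  have hfin_inner : (innerDom M₀).Finite := by
    apply Set.Finite.subset ((Set.finite_Icc (-M₀) M₀).prod (Set.finite_Icc (-M₀) M₀))
    rintro ⟨x1, x2⟩ ⟨h1, h2⟩
    simp only [Set.mem_prod, Set.mem_Icc]
    constructor <;> [exact abs_le.1 h1; exact abs_le.1 h2]
  have hTfin : {t : ℤ | (Φ t).1 ∈ innerDom M₀}.Finite := by
    have : {t : ℤ | (Φ t).1 ∈ innerDom M₀} = Φ ⁻¹' ((innerDom M₀) ×ˢ (Set.univ : Set Chir)) := by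
      ext t; simp [Set.mem_prod]
    rw [this]
    exact Set.Finite.preimage hinj.injOn (hfin_inner.prod (Set.finite_univ))
  obtain ⟨B, hB⟩ := hTfin.bddAbove
  set T : ℤ := B + 1 with hTdef
  have hout : ∀ t : ℤ, T ≤ t → (Φ t).1 ∉ innerDom M₀ := by
    intro t ht hc
    have := hB hc
    omega
  set a : Site := (Φ T).1 with ha
  set k : Chir := (Φ T).2 with hk
  have hray : ∀ s : ℕ, Φ (T + s) = (a + (s:ℤ) • dvec k, k) := by
    intro s
    induction s with
    | zero => simp [ha, hk]
    | succ n ih =>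
      have e : T + ((n+1 : ℕ) : ℤ) = (T + n) + 1 := by push_cast; ring
      rw [e, hstep, ih]
      have hpos : (a + (n:ℤ) • dvec k) ∉ innerDom M₀ := by
        have := hout (T + n) (by omega)
        rw [ih] at this
        exact this
      simp only [Fstep]
      rw [hfree _ hpos]
      have : ((n:ℤ)+1) • dvec k = (n:ℤ) • dvec k + dvec k := by
        rw [add_smul, one_smul]
      push_cast
      rw [this, ← add_assoc]
  have hfor : ∀ t : ℤ, T ≤ t → Φ t = (a + (t - T) • dvec k, k) := by
    intro t ht
    have h1 := hray (t - T).toNat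
    have e1 : T + ((t - T).toNat : ℤ) = t := by omega
    have e2 : ((t - T).toNat : ℤ) = t - T := by omega
    rw [e1, e2] at h1
    exact h1
  obtain ⟨B', hB'⟩ := hTfin.bddBelow
  set T' : ℤ := B' - 1 with hT'def
  have hout' : ∀ t : ℤ, t ≤ T' → (Φ t).1 ∉ innerDom M₀ := by
    intro t ht hc
    have := hB' hc
    omega
  set a' : Site := (Φ T').1 with ha'
  set k' : Chir := (Φ T').2 with hk'
  have hray' : ∀ s : ℕ, Φ (T' - s) = (a' + (-(s:ℤ)) • dvec k', k') := by
    intro s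
    induction s with
    | zero => simp [ha', hk']
    | succ n ih =>
      have e : T' - (n:ℤ) = (T' - ((n+1:ℕ):ℤ)) + 1 := by push_cast; ring
      have hw : (Φ (T' - ((n+1:ℕ):ℤ))).1 ∉ innerDom M₀ := hout' _ (by push_cast; omega)
      have hstep' : Φ (T' - (n:ℤ)) =
          ((Φ (T' - ((n+1:ℕ):ℤ))).1 + dvec ((Φ (T' - ((n+1:ℕ):ℤ))).2), (Φ (T' - ((n+1:ℕ):ℤ))).2) := by
        rw [e, hstep]
        simp only [Fstep]
        rw [hfree _ hw]
      rw [ih] at hstep'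
      have h2 : (Φ (T' - ((n+1:ℕ):ℤ))).2 = k' := (congrArg Prod.snd hstep').symm
      have h1 : a' + (-(n:ℤ)) • dvec k' = (Φ (T' - ((n+1:ℕ):ℤ))).1 + dvec ((Φ (T' - ((n+1:ℕ):ℤ))).2) :=
        congrArg Prod.fst hstep'
      rw [h2] at h1
      have hsm : (-((n+1:ℕ):ℤ)) • dvec k' = (-(n:ℤ)) • dvec k' + (-1 : ℤ) • dvec k' := by
        rw [← add_smul]
        congr 1
        push_cast
        ring
      have hx : (Φ (T' - ((n+1:ℕ):ℤ))).1 = a' + (-((n+1:ℕ):ℤ)) • dvec k' := by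
        rw [hsm, neg_one_zsmul]
        have : (Φ (T' - ((n+1:ℕ):ℤ))).1 = a' + (-(n:ℤ)) • dvec k' - dvec k' := by
          rw [h1]; abel
        rw [this]; abel
      exact Prod.ext hx h2
  have hback : ∀ t : ℤ, t ≤ T' → Φ t = (a' + (t - T') • dvec k', k') := by
    intro t ht
    have h1 := hray' (T' - t).toNat
    have e1 : T' - ((T' - t).toNat : ℤ) = t := by omega
    have e2 : (-((T' - t).toNat : ℤ)) = t - T' := by omega
    rw [e1, e2] at h1
    exact h1
  constructor
  · rw [Filter.tendsto_atTop]
    intro b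
    rw [Filter.eventually_atTop]
    refine ⟨max T (T + ⌈b + znorm a⌉), fun t ht => ?_⟩
    have htT : T ≤ t := le_trans (le_max_left _ _) ht
    rw [hfor t htT]
    have hz := znorm_add_dvec a k (t - T)
    have hce : (⌈b + znorm a⌉ : ℝ) ≤ ((t - T : ℤ) : ℝ) := by
      have : T + ⌈b + znorm a⌉ ≤ t := le_trans (le_max_right _ _) ht
      exact_mod_cast (by omega : ⌈b + znorm a⌉ ≤ t - T)
    have hbz : b + znorm a ≤ ((t - T : ℤ) : ℝ) := le_trans (Int.le_ceil _) hce
    have habs : ((t - T : ℤ) : ℝ) ≤ |((t - T : ℤ) : ℝ)| := le_abs_self _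
    simp only
    linarith
  · rw [Filter.tendsto_atTop]
    intro b
    rw [Filter.eventually_atBot]
    refine ⟨min T' (T' - ⌈b + znorm a'⌉), fun t ht => ?_⟩
    have htT : t ≤ T' := le_trans ht (min_le_left _ _)
    rw [hback t htT]
    have hz := znorm_add_dvec a' k' (t - T')
    have hce : (⌈b + znorm a'⌉ : ℝ) ≤ ((T' - t : ℤ) : ℝ) := by
      have : t ≤ T' - ⌈b + znorm a'⌉ := le_trans ht (min_le_right _ _)
      exact_mod_cast (by omega : ⌈b + znorm a'⌉ ≤ T' - t)
    have hbz : b + znorm a' ≤ ((T' - t : ℤ) : ℝ) := le_trans (Int.le_ceil _) hce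
    have habs : ((T' - t : ℤ) : ℝ) ≤ |((t - T' : ℤ) : ℝ)| := by
      rw [← abs_neg]
      have : (-((t - T' : ℤ) : ℝ)) = ((T' - t : ℤ) : ℝ) := by push_cast; ring
      rw [this]
      exact le_abs_self _
    simp only
    linarith

end core

set_option maxHeartbeats 1000000 in
/-- a trajectory of an elastic quantum walk is closed iff it is bounded, and it
escapes to infinity in the future iff it escapes to infinity in the past. -/
theorem trajectory_closed_iff_bounded
    (M₀ : ℤ) (hM₀ : 1 ≤ M₀)
    (σ : Site → Equiv.Perm Chir) (α : Site → Chir → ℝ)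
    (hA1 : ∀ x, x ∉ innerDom M₀ → elasticCoin σ α x = 1)
    (S Cop : H →L[ℂ] H) (hS : IsShiftOp S) (hCop : IsCoinOp Cop (elasticCoin σ α))
    (Uel : unitary (H →L[ℂ] H)) (hUel : (Uel : H →L[ℂ] H) = S.comp Cop)
    (q : ℤ → Site → Chir → Site) (p : ℤ → Site → Chir → Chir)
    (htraj : IsTrajectory Uel q p) (y : Site) (j : Chir) :
    ((∃ t₁ t₂ : ℤ, t₁ < t₂ ∧ q t₁ y j = q t₂ y j ∧ p t₁ y j = p t₂ y j) ↔
      (∃ ρ : ℝ, ∀ t : ℤ, znorm (q t y j) ≤ ρ)) ∧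
    (Filter.Tendsto (fun t : ℤ => znorm (q t y j)) Filter.atTop Filter.atTop ↔
      Filter.Tendsto (fun t : ℤ => znorm (q t y j)) Filter.atBot Filter.atTop) := by
  have hfree : ∀ x, x ∉ innerDom M₀ → ∀ k : Chir, σ x k = k := fun x hx k => sigma_free hA1 hx k
  have hstep : ∀ t : ℤ, (fun s : ℤ => (q s y j, p s y j)) (t+1)
      = Fstep σ ((fun s : ℤ => (q s y j, p s y j)) t) := by
    intro t
    have := step_lemma σ α S Cop hS hCop Uel hUel q p htraj y j t
    simp only [Fstep]
    exact Prod.ext this.1 this.2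
  have part1 : (∃ t₁ t₂ : ℤ, t₁ < t₂ ∧ q t₁ y j = q t₂ y j ∧ p t₁ y j = p t₂ y j) ↔
      (∃ ρ : ℝ, ∀ t : ℤ, znorm (q t y j) ≤ ρ) := by
    constructor
    · rintro ⟨t₁, t₂, hlt, hq, hp⟩
      exact bounded_of_closed (Φ := fun s : ℤ => (q s y j, p s y j)) hstep hlt (Prod.ext hq hp)
    · intro hbd
      obtain ⟨t₁, t₂, hlt, hqp⟩ :=
        closed_of_bounded (Φ := fun s : ℤ => (q s y j, p s y j)) hbd
      exact ⟨t₁, t₂, hlt, congrArg Prod.fst hqp, congrArg Prod.snd hqp⟩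
  refine ⟨part1, ?_⟩
  by_cases hcl : ∃ t₁ t₂ : ℤ, t₁ < t₂ ∧ q t₁ y j = q t₂ y j ∧ p t₁ y j = p t₂ y j
  · obtain ⟨ρ, hρ⟩ := part1.1 hcl
    have hnotTop : ¬ Filter.Tendsto (fun t : ℤ => znorm (q t y j)) Filter.atTop Filter.atTop := by
      intro h
      obtain ⟨t, ht⟩ := (Filter.tendsto_atTop.1 h (ρ + 1)).exists
      have := hρ t
      linarith
    have hnotBot : ¬ Filter.Tendsto (fun t : ℤ => znorm (q t y j)) Filter.atBot Filter.atTop := by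
      intro h
      obtain ⟨t, ht⟩ := (Filter.tendsto_atTop.1 h (ρ + 1)).exists
      have := hρ t
      linarith
    exact iff_of_false hnotTop hnotBot
  · have hinj : Function.Injective (fun s : ℤ => (q s y j, p s y j)) := by
      intro s t hst
      by_contra hne
      apply hcl
      rcases lt_or_gt_of_ne hne with h | h
      · exact ⟨s, t, h, congrArg Prod.fst hst, congrArg Prod.snd hst⟩
      · exact ⟨t, s, h, congrArg Prod.fst hst.symm, congrArg Prod.snd hst.symm⟩
    obtain ⟨h1, h2⟩ := tendsto_of_injective (Φ := fun s : ℤ => (q s y j, p s y j)) M₀ hfree hstep hinj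
    exact iff_of_true h1 h2

end QWPaper
end
end

section
/- Let U_el be an elastic quantum walk satisfying (A-1). (i) U_el has an eigenvalue if and only if some trajectory Φ(·,y,j) is closed. (ii) If Φ(·,y,j) is closed with Φ(0,y,j) = Φ(N,y,j) for the minimal period N ≥ 1, set β_t = α_{p(t,y,j)}(q(t,y,j)). Then for each λ ∈ ℝ with λN + β₀ + β₁ + ⋯ + β_{N−1} ∈ 2πℤ, the number e^{−iλ} is an eigenvalue of U_el possessing an eigenfunction supported on {Φ(t,y,j) : 0 ≤ t < N} (a map u is supported on a set A ⊆ ℤ² × {←,→,↓,↑} if u_k(x) = 0 whenever (x,k) ∉ A); there are exactly N such eigenvalues e^{−iλ}. -/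
noncomputable section

namespace QWPaper

open Complex

lemma smul_apply' (c : ℂ) (u : H) (x : Site) (i : Chir) : (c • u) x i = c * u x i := by
  rw [lp.coeFn_smul]; rfl

lemma sum_apply' {ι : Type*} (s : Finset ι) (f : ι → H) (x : Site) (i : Chir) :
    (∑ t ∈ s, f t) x i = ∑ t ∈ s, f t x i := by
  rw [lp.coeFn_sum, Finset.sum_apply]; rw [WithLp.ofLp_sum, Finset.sum_apply]

lemma delta_smul_eq {c c' : ℂ} {y y' : Site} {j j' : Chir}
    (hc : c ≠ 0) (h : c • deltaState y j = c' • deltaState y' j') :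
    y = y' ∧ j = j' ∧ c = c' := by
  have h1 : (c • deltaState y j) y j = (c' • deltaState y' j') y j := by rw [h]
  rw [smul_apply', smul_apply', deltaState_apply, deltaState_apply, if_pos ⟨rfl, rfl⟩] at h1
  by_cases hcond : y = y' ∧ j = j'
  · refine ⟨hcond.1, hcond.2, ?_⟩
    rw [if_pos hcond] at h1; simpa using h1
  · rw [if_neg hcond] at h1; simp at h1; exact absurd h1 (by simpa using hc)

abbrev UG := unitary (H →L[ℂ] H)

lemma mul_apply' (A B : UG) (u : H) :
    ((A * B : UG) : H →L[ℂ] H) u = (A : H →L[ℂ] H) ((B : H →L[ℂ] H) u) := by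
  rw [MulMemClass.coe_mul, ContinuousLinearMap.mul_apply]

lemma inv_apply' (A : UG) (u : H) :
    ((A⁻¹ : UG) : H →L[ℂ] H) ((A : H →L[ℂ] H) u) = u := by
  have h : ((A⁻¹ * A : UG) : H →L[ℂ] H) u = u := by
    rw [inv_mul_cancel, OneMemClass.coe_one, ContinuousLinearMap.one_apply]
  rwa [mul_apply'] at h

lemma zpow_eigen (A : UG) {z : ℂ} (hz : z ≠ 0) {u : H}
    (h : (A : H →L[ℂ] H) u = z • u) (t : ℤ) :
    ((A ^ t : UG) : H →L[ℂ] H) u = z ^ t • u := by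
  have hinv : ((A⁻¹ : UG) : H →L[ℂ] H) u = z⁻¹ • u := by
    have := inv_apply' A u
    rw [h, map_smul] at this
    calc ((A⁻¹ : UG) : H →L[ℂ] H) u = z⁻¹ • (z • ((A⁻¹ : UG) : H →L[ℂ] H) u) := by
          rw [smul_smul, inv_mul_cancel₀ hz, one_smul]
      _ = z⁻¹ • u := by rw [this]
  induction t using Int.induction_on with
  | zero => rw [zpow_zero, zpow_zero, OneMemClass.coe_one, ContinuousLinearMap.one_apply, one_smul]
  | succ n ih =>
      rw [zpow_add_one, mul_apply', h, map_smul, ih, smul_smul,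
        zpow_add_one₀ hz, mul_comm]
  | pred n ih =>
      rw [zpow_sub_one, mul_apply', hinv, map_smul, ih, smul_smul,
        zpow_sub_one₀ hz, mul_comm]

def nb (w : Site) (k : Chir) : Site :=
  if k = 0 then (w.1 + 1, w.2) else if k = 1 then (w.1 - 1, w.2)
  else if k = 2 then (w.1, w.2 + 1) else (w.1, w.2 - 1)

lemma walk_eval {S Cop : H →L[ℂ] H} (hS : IsShiftOp S) {C : Site → Matrix Chir Chir ℂ}
    (hCop : IsCoinOp Cop C) (u : H) (w : Site) (k : Chir) :
    (S.comp Cop) u w k = ∑ j : Chir, C (nb w k) k j * u (nb w k) j := by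
  have hs := hS (Cop u) w
  rw [ContinuousLinearMap.comp_apply]
  fin_cases k
  · simpa [nb] using (hs.1).trans (hCop u _ 0)
  · simpa [nb] using (hs.2.1).trans (hCop u _ 1)
  · simpa [nb] using (hs.2.2.1).trans (hCop u _ 2)
  · simpa [nb] using (hs.2.2.2).trans (hCop u _ 3)

lemma norm_one_ne_zero {c : ℂ} (hc : ‖c‖ = 1) : c ≠ 0 := by
  intro h; rw [h] at hc; simp at hc

lemma walk_step {σ : Site → Equiv.Perm Chir} {α : Site → Chir → ℝ}
    {S Cop : H →L[ℂ] H} (hS : IsShiftOp S) (hCop : IsCoinOp Cop (elasticCoin σ α))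
    {Uel : UG} (hUel : (Uel : H →L[ℂ] H) = S.comp Cop)
    {q : ℤ → Site → Chir → Site} {p : ℤ → Site → Chir → Chir}
    (htraj : IsTrajectory Uel q p) (x : Site) (i : Chir) :
    (Uel : H →L[ℂ] H) (deltaState x i)
      = Complex.exp (Complex.I * (α x i : ℂ)) • deltaState (q 1 x i) (p 1 x i) := by
  obtain ⟨c, hc1, hc⟩ := htraj.2 1 x i
  rw [zpow_one] at hc
  have he : (Uel : H →L[ℂ] H) (deltaState x i) (q 1 x i) (p 1 x i) = c := by
    rw [hc, smul_apply', deltaState_apply, if_pos ⟨rfl, rfl⟩, mul_one]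
  rw [hUel, walk_eval hS hCop] at he
  simp only [deltaState_apply] at he
  by_cases hx : nb (q 1 x i) (p 1 x i) = x
  · simp only [hx, true_and, mul_ite, mul_one, mul_zero, Finset.sum_ite_eq',
      Finset.mem_univ, if_true] at he
    have hcoin : elasticCoin σ α x (p 1 x i) i = c := he
    rw [elasticCoin, Matrix.of_apply] at hcoin
    by_cases hp : p 1 x i = σ x i
    · rw [if_pos hp] at hcoin
      rw [hUel] at hc ⊢
      rw [hc, ← hcoin]
    · rw [if_neg hp] at hcoin
      exact absurd hcoin.symm (norm_one_ne_zero hc1)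
  · simp only [hx, false_and, if_false, mul_zero, Finset.sum_const_zero] at he
    exact absurd he.symm (norm_one_ne_zero hc1)

lemma traj_add {Uel : UG} {q : ℤ → Site → Chir → Site} {p : ℤ → Site → Chir → Chir}
    (htraj : IsTrajectory Uel q p) (s t : ℤ) (y : Site) (j : Chir) :
    q (s + t) y j = q s (q t y j) (p t y j) ∧ p (s + t) y j = p s (q t y j) (p t y j) := by
  obtain ⟨c1, hc1, h1⟩ := htraj.2 t y j
  obtain ⟨c2, hc2, h2⟩ := htraj.2 s (q t y j) (p t y j)
  obtain ⟨c3, hc3, h3⟩ := htraj.2 (s + t) y j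
  have key : c3 • deltaState (q (s + t) y j) (p (s + t) y j)
      = (c2 * c1) • deltaState (q s (q t y j) (p t y j)) (p s (q t y j) (p t y j)) := by
    rw [← h3, zpow_add, mul_apply', h1, map_smul, h2, smul_smul, mul_comm]
  have := delta_smul_eq (norm_one_ne_zero hc3) key
  exact ⟨this.1, this.2.1⟩

lemma pow_delta {σ : Site → Equiv.Perm Chir} {α : Site → Chir → ℝ}
    {S Cop : H →L[ℂ] H} (hS : IsShiftOp S) (hCop : IsCoinOp Cop (elasticCoin σ α))
    {Uel : UG} (hUel : (Uel : H →L[ℂ] H) = S.comp Cop)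
    {q : ℤ → Site → Chir → Site} {p : ℤ → Site → Chir → Chir}
    (htraj : IsTrajectory Uel q p) (y : Site) (j : Chir) (n : ℕ) :
    ((Uel ^ (n : ℤ) : UG) : H →L[ℂ] H) (deltaState y j)
      = Complex.exp (Complex.I *
          ((∑ t ∈ Finset.range n, α (q (t : ℤ) y j) (p (t : ℤ) y j) : ℝ) : ℂ))
        • deltaState (q (n : ℤ) y j) (p (n : ℤ) y j) := by
  induction n with
  | zero =>
      rw [Nat.cast_zero, zpow_zero, OneMemClass.coe_one, ContinuousLinearMap.one_apply,
        (htraj.1 y j).1, (htraj.1 y j).2]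
      simp
  | succ n ih =>
      have hcast : ((n + 1 : ℕ) : ℤ) = 1 + (n : ℤ) := by push_cast; ring
      have hq := traj_add htraj 1 (n : ℤ) y j
      rw [hcast, zpow_add, mul_apply', ih, map_smul, zpow_one,
        walk_step hS hCop hUel htraj, hq.1, hq.2, smul_smul, ← Complex.exp_add,
        Finset.sum_range_succ]
      congr 2
      push_cast
      ring

lemma construct_eigen {σ : Site → Equiv.Perm Chir} {α : Site → Chir → ℝ}
    {S Cop : H →L[ℂ] H} (hS : IsShiftOp S) (hCop : IsCoinOp Cop (elasticCoin σ α))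
    {Uel : UG} (hUel : (Uel : H →L[ℂ] H) = S.comp Cop)
    {q : ℤ → Site → Chir → Site} {p : ℤ → Site → Chir → Chir}
    (htraj : IsTrajectory Uel q p) (y : Site) (j : Chir) (N : ℕ) (hN : 1 ≤ N)
    (hper : q (N : ℤ) y j = y ∧ p (N : ℤ) y j = j)
    (hmin : ∀ m : ℕ, 0 < m → m < N → ¬(q (m : ℤ) y j = y ∧ p (m : ℤ) y j = j))
    (lam : ℝ)
    (hlam : ∃ n : ℤ, lam * N + ∑ t ∈ Finset.range N, α (q (t : ℤ) y j) (p (t : ℤ) y j)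
        = 2 * Real.pi * n) :
    ∃ u : H, u ≠ 0 ∧ (Uel : H →L[ℂ] H) u = Complex.exp (-(Complex.I * (lam : ℂ))) • u ∧
      ∀ (x : Site) (k : Chir),
        (x, k) ∉ {w : Site × Chir | ∃ t : ℕ, t < N ∧ w = (q (t : ℤ) y j, p (t : ℤ) y j)} →
        u x k = 0 := by
  obtain ⟨n, hn⟩ := hlam
  set f : ℕ → H := fun t => Complex.exp (Complex.I * lam * t) •
    ((Uel ^ (t : ℤ) : UG) : H →L[ℂ] H) (deltaState y j) with hf
  set u : H := ∑ t ∈ Finset.range N, f t with hu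
  have hf0 : f 0 = deltaState y j := by
    simp only [hf, Nat.cast_zero, zpow_zero, OneMemClass.coe_one,
      ContinuousLinearMap.one_apply, mul_zero, Complex.exp_zero, one_smul]
  have hfN : f N = deltaState y j := by
    rw [hf]
    simp only
    rw [pow_delta hS hCop hUel htraj, hper.1, hper.2, smul_smul, ← Complex.exp_add]
    have : Complex.I * ↑lam * ↑N +
        Complex.I * ((∑ t ∈ Finset.range N, α (q (t : ℤ) y j) (p (t : ℤ) y j) : ℝ) : ℂ)
        = (n : ℂ) * (2 * Real.pi * Complex.I) := by
      have := congrArg (fun r : ℝ => Complex.I * (r : ℂ)) hn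
      push_cast at this ⊢
      ring_nf at this ⊢
      linear_combination this
    rw [this, Complex.exp_int_mul_two_pi_mul_I, one_smul]
  -- eigen equation
  have heig : (Uel : H →L[ℂ] H) u = Complex.exp (-(Complex.I * (lam : ℂ))) • u := by
    rw [hu, map_sum]
    have hterm : ∀ t : ℕ, (Uel : H →L[ℂ] H) (f t)
        = Complex.exp (-(Complex.I * (lam : ℂ))) • f (t + 1) := by
      intro t
      have h1 : (Uel : H →L[ℂ] H) (((Uel ^ (t : ℤ) : UG) : H →L[ℂ] H) (deltaState y j))
          = ((Uel ^ ((t + 1 : ℕ) : ℤ) : UG) : H →L[ℂ] H) (deltaState y j) := by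
        have : ((t + 1 : ℕ) : ℤ) = 1 + (t : ℤ) := by push_cast; ring
        rw [this, zpow_add, mul_apply', zpow_one]
      rw [hf]
      simp only
      rw [map_smul, h1, smul_smul, ← Complex.exp_add]
      congr 2
      push_cast
      ring
    rw [Finset.sum_congr rfl fun t _ => hterm t, ← Finset.smul_sum]
    congr 1
    have h2 : ∑ t ∈ Finset.range (N + 1), f t = (∑ t ∈ Finset.range N, f (t + 1)) + f 0 :=
      Finset.sum_range_succ' f N
    have h3 : ∑ t ∈ Finset.range (N + 1), f t = (∑ t ∈ Finset.range N, f t) + f N :=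
      Finset.sum_range_succ f N
    have : (∑ t ∈ Finset.range N, f (t + 1)) + f 0 = (∑ t ∈ Finset.range N, f t) + f N := by
      rw [← h2, h3]
    rw [hfN, ← hf0] at this
    exact add_right_cancel this
  refine ⟨u, ?_, heig, ?_⟩
  · -- u y j = 1
    have hval : u y j = 1 := by
      rw [hu, sum_apply']
      have hterm : ∀ t ∈ Finset.range N, f t y j
          = if t = 0 then 1 else 0 := by
        intro t ht
        rw [Finset.mem_range] at ht
        rw [hf]
        simp only
        rw [pow_delta hS hCop hUel htraj, smul_smul, smul_apply', deltaState_apply]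
        rcases Nat.eq_zero_or_pos t with rfl | htpos
        · rw [if_pos ⟨(htraj.1 y j).1.symm, (htraj.1 y j).2.symm⟩, if_pos rfl]
          simp [(htraj.1 y j).1, (htraj.1 y j).2]
        · have hne := hmin t htpos ht
          have : ¬(y = q (t : ℤ) y j ∧ j = p (t : ℤ) y j) := by
            intro hcon; exact hne ⟨hcon.1.symm, hcon.2.symm⟩
          rw [if_neg this, if_neg (Nat.pos_iff_ne_zero.mp htpos), mul_zero]
      rw [Finset.sum_congr rfl hterm, Finset.sum_ite_eq' (Finset.range N) 0 (fun _ => (1:ℂ))]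
      rw [if_pos (Finset.mem_range.mpr hN)]
    intro h0
    rw [h0] at hval
    have : (0 : H) y j = 0 := by rw [lp.coeFn_zero]; rfl
    rw [this] at hval
    exact one_ne_zero hval.symm
  · intro x k hxk
    rw [hu, sum_apply']
    refine Finset.sum_eq_zero fun t ht => ?_
    rw [Finset.mem_range] at ht
    rw [hf]
    simp only
    rw [pow_delta hS hCop hUel htraj, smul_smul, smul_apply', deltaState_apply]
    have : ¬(x = q (t : ℤ) y j ∧ k = p (t : ℤ) y j) := by
      intro hcon
      exact hxk ⟨t, ht, by rw [Prod.ext_iff]; exact ⟨hcon.1, hcon.2⟩⟩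
    rw [if_neg this, mul_zero]

lemma count_eigen (N : ℕ) (hN : 1 ≤ N) (B : ℝ) :
    Set.ncard {z : ℂ | ∃ lam : ℝ, z = Complex.exp (-(Complex.I * (lam : ℂ))) ∧
        ∃ n : ℤ, lam * N + B = 2 * Real.pi * n} = N := by
  have hN0 : (N : ℝ) ≠ 0 := Nat.cast_ne_zero.mpr (by omega)
  set g : ℤ → ℂ := fun n =>
    Complex.exp (-(Complex.I * (((2 * Real.pi * n - B) / N : ℝ) : ℂ))) with hg
  have hrange : {z : ℂ | ∃ lam : ℝ, z = Complex.exp (-(Complex.I * (lam : ℂ))) ∧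
      ∃ n : ℤ, lam * N + B = 2 * Real.pi * n} = Set.range g := by
    ext z
    constructor
    · rintro ⟨lam, hz, n, hn⟩
      refine ⟨n, ?_⟩
      have : lam = (2 * Real.pi * n - B) / N := by field_simp; linarith
      rw [hg]; simp only; rw [← this, ← hz]
    · rintro ⟨n, hzn⟩
      exact ⟨(2 * Real.pi * n - B) / N, hzn.symm, n, by field_simp; ring⟩
  have hper : ∀ (k m : ℤ), g (k + N * m) = g k := by
    intro k m
    rw [hg]
    simp only
    have harg : (-(Complex.I * (((2 * Real.pi * (k + N * m) - B) / N : ℝ) : ℂ)))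
        = -(Complex.I * (((2 * Real.pi * k - B) / N : ℝ) : ℂ)) + (-m : ℤ) * (2 * Real.pi * Complex.I) := by
      have h1 : ((2 * Real.pi * (k + N * m) - B) / N : ℝ)
          = (2 * Real.pi * k - B) / N + 2 * Real.pi * m := by field_simp; ring
      rw [h1]
      push_cast
      ring
    have hc : ((k + (N : ℤ) * m : ℤ) : ℝ) = (k : ℝ) + (N : ℝ) * (m : ℝ) := by push_cast; ring
    rw [hc, harg, Complex.exp_add, Complex.exp_int_mul_two_pi_mul_I, mul_one]
  set h : Fin N → ℂ := fun k => g k with hh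
  have himg : Set.range g = Set.range h := by
    apply Set.Subset.antisymm
    · rintro z ⟨n, rfl⟩
      have h1 : 0 ≤ n % N := Int.emod_nonneg n (by exact_mod_cast (by omega : (N:ℤ) ≠ 0))
      have h2 : n % N < N := Int.emod_lt_of_pos n (by exact_mod_cast (by omega : 0 < (N:ℤ)))
      refine ⟨⟨(n % N).toNat, by omega⟩, ?_⟩
      rw [hh]
      simp only
      have : ((((n % N).toNat : ℕ) : ℤ)) = n % N := Int.toNat_of_nonneg h1
      rw [this]
      have : n = n % N + N * (n / N) := (Int.emod_add_mul_ediv n N).symm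
      conv_rhs => rw [this]
      rw [hper]
    · rintro z ⟨k, rfl⟩
      exact ⟨k, rfl⟩
  have hinj : Function.Injective h := by
    intro k k' hkk
    rw [hh] at hkk
    simp only at hkk
    rw [hg] at hkk
    simp only at hkk
    rw [Complex.exp_eq_exp_iff_exists_int] at hkk
    obtain ⟨m, hm⟩ := hkk
    have key : (((2 * Real.pi * k' - B) / N : ℝ) : ℂ) - (((2 * Real.pi * k - B) / N : ℝ) : ℂ)
        = (m : ℂ) * (2 * (Real.pi : ℂ)) :=
      mul_left_cancel₀ Complex.I_ne_zero (by linear_combination hm)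
    have hreal : ((2 * Real.pi * k' - B) / N : ℝ) - ((2 * Real.pi * k - B) / N : ℝ)
        = (m : ℝ) * (2 * Real.pi) := by exact_mod_cast key
    have hπ : (0:ℝ) < Real.pi := Real.pi_pos
    have hNpos : (0:ℝ) < N := by positivity
    have h2π : (2 * Real.pi : ℝ) ≠ 0 := by positivity
    have hdiff : ((k' : ℝ) : ℝ) - (k : ℝ) = (m : ℝ) * N := by
      have hmul : (2 * Real.pi) * (((k' : ℝ)) - (k : ℝ)) = (2 * Real.pi) * ((m : ℝ) * N) := by
        field_simp at hreal
        ring_nf at hreal ⊢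
        linarith
      exact mul_left_cancel₀ h2π hmul
    have hk : ((k : ℝ)) < N := by exact_mod_cast k.2
    have hk' : ((k' : ℝ)) < N := by exact_mod_cast k'.2
    have hk0 : (0:ℝ) ≤ (k : ℝ) := by positivity
    have hk0' : (0:ℝ) ≤ (k' : ℝ) := by positivity
    have hm0 : m = 0 := by
      by_contra hne
      have h1 : (1:ℝ) ≤ |(m:ℝ)| := by exact_mod_cast Int.one_le_abs hne
      have h2 : |(k':ℝ) - (k:ℝ)| < N := by
        rw [abs_sub_lt_iff]; constructor <;> linarith
      rw [hdiff, abs_mul, abs_of_pos hNpos] at h2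
      nlinarith
    have hval : ((k' : ℝ)) = (k : ℝ) := by rw [hm0] at hdiff; push_cast at hdiff; linarith
    have hnat : (k' : ℕ) = (k : ℕ) := by exact_mod_cast hval
    exact Fin.ext hnat.symm
  rw [hrange, himg]
  have : Set.range h = ↑(Finset.image h Finset.univ) := by
    rw [Finset.coe_image, Finset.coe_univ, Set.image_univ]
  rw [this, Set.ncard_coe_finset, Finset.card_image_of_injective _ hinj,
    Finset.card_univ, Fintype.card_fin]

lemma comp_norm_le (v : V) (k : Chir) : ‖v k‖ ≤ ‖v‖ := by
  rw [EuclideanSpace.norm_eq]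
  have h1 : ‖v k‖ ^ 2 ≤ ∑ i : Chir, ‖v i‖ ^ 2 :=
    Finset.single_le_sum (f := fun i => ‖v i‖ ^ 2) (fun i _ => by positivity)
      (Finset.mem_univ k)
  calc ‖v k‖ = Real.sqrt (‖v k‖ ^ 2) := (Real.sqrt_sq (norm_nonneg _)).symm
    _ ≤ Real.sqrt (∑ i : Chir, ‖v i‖ ^ 2) := Real.sqrt_le_sqrt h1

lemma forward_closed {Uel : UG} {q : ℤ → Site → Chir → Site} {p : ℤ → Site → Chir → Chir}
    (htraj : IsTrajectory Uel q p) {z : ℂ} {u : H} (hu : u ≠ 0)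
    (heig : (Uel : H →L[ℂ] H) u = z • u) :
    ∃ (y : Site) (j : Chir) (t₁ t₂ : ℤ),
      t₁ < t₂ ∧ q t₁ y j = q t₂ y j ∧ p t₁ y j = p t₂ y j := by
  -- find a nonzero component
  have hex : ∃ (x : Site) (i : Chir), u x i ≠ 0 := by
    by_contra hc
    push_neg at hc
    exact hu (lp.ext (by funext x; ext i; rw [hc x i, lp.coeFn_zero]; rfl))
  obtain ⟨x, i, hxi⟩ := hex
  by_contra hcl
  push_neg at hcl
  -- injectivity of the trajectory map
  have hinj : Function.Injective (fun t : ℤ => (q t x i, p t x i)) := by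
    intro t t' htt
    simp only [Prod.mk.injEq] at htt
    by_contra hne
    rcases lt_trichotomy t t' with h | h | h
    · exact hcl x i t t' h htt.1 htt.2
    · exact hne h
    · exact hcl x i t' t h htt.1.symm htt.2.symm
  -- |z| = 1
  have hz1 : ‖z‖ = 1 := by
    have h1 : ‖(Uel : H →L[ℂ] H) u‖ = ‖u‖ := Unitary.norm_map Uel u
    rw [heig, norm_smul] at h1
    have hu0 : ‖u‖ ≠ 0 := norm_ne_zero_iff.mpr hu
    field_simp at h1
    exact h1
  have hz0 : z ≠ 0 := norm_one_ne_zero hz1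
  -- constancy of |u| along the trajectory
  have hconst : ∀ t : ℤ, ‖u (q t x i) (p t x i)‖ = ‖u x i‖ := by
    intro t
    obtain ⟨c, hc1, hc⟩ := htraj.2 t x i
    have hinner1 : (inner ℂ (((Uel ^ t : UG) : H →L[ℂ] H) (deltaState x i)) u : ℂ)
        = (starRingEnd ℂ) c * u (q t x i) (p t x i) := by
      rw [hc, inner_smul_left]
      congr 1
      unfold deltaState
      rw [lp.inner_single_left, EuclideanSpace.inner_single_left]
      simp
    have hback : ((Uel ^ t : UG) : H →L[ℂ] H) (((Uel ^ (-t) : UG) : H →L[ℂ] H) u) = u := by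
      have h1 : ((Uel ^ t * Uel ^ (-t) : UG) : H →L[ℂ] H) u = u := by
        rw [← zpow_add, add_neg_cancel, zpow_zero, OneMemClass.coe_one,
          ContinuousLinearMap.one_apply]
      rwa [mul_apply'] at h1
    have hinner2 : (inner ℂ (((Uel ^ t : UG) : H →L[ℂ] H) (deltaState x i)) u : ℂ)
        = z ^ (-t) * u x i := by
      conv_lhs => rw [← hback]
      rw [Unitary.inner_map_map, zpow_eigen Uel hz0 heig, inner_smul_right]
      congr 1
      unfold deltaState
      rw [lp.inner_single_left, EuclideanSpace.inner_single_left]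
      simp
    have hnorm := congrArg norm (hinner1.symm.trans hinner2)
    rw [norm_mul, norm_mul, norm_zpow, hz1, one_zpow, one_mul] at hnorm
    have hconj : ‖(starRingEnd ℂ) c‖ = 1 := by rwa [RCLike.norm_conj]
    rw [hconj, one_mul] at hnorm
    exact hnorm
  -- summability and finiteness
  set ε : ℝ := ‖u x i‖ with hε
  have hεpos : 0 < ε := norm_pos_iff.mpr hxi
  have hsum : Summable (fun s : Site => ‖u s‖ ^ (2 : ℕ)) := by
    have h0 := (lp.memℓp u).summable (p := 2) (by norm_num)
    simpa [show ((2 : ENNReal)).toReal = ((2 : ℕ) : ℝ) from by norm_num,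
      Real.rpow_natCast] using h0
  have hev : ∀ᶠ s in Filter.cofinite, ‖u s‖ ^ (2 : ℕ) < ε ^ 2 := by
    refine hsum.tendsto_cofinite_zero.eventually_lt_const ?_
    positivity
  have hfin : {s : Site | ¬ (‖u s‖ ^ (2 : ℕ) < ε ^ 2)}.Finite :=
    Filter.eventually_cofinite.mp hev
  have hsub : Set.range (fun t : ℤ => (q t x i, p t x i)) ⊆
      ({s : Site | ¬ (‖u s‖ ^ (2 : ℕ) < ε ^ 2)} ×ˢ (Set.univ : Set Chir)) := by
    rintro w ⟨t, rfl⟩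
    refine ⟨?_, trivial⟩
    simp only [Set.mem_setOf_eq, not_lt]
    have h1 : ε ≤ ‖u (q t x i)‖ := (hconst t).symm.le.trans (comp_norm_le _ _)
    nlinarith
  exact Set.infinite_range_of_injective hinj ((hfin.prod Set.finite_univ).subset hsub)

/-- an elastic quantum walk has an eigenvalue iff some trajectory is closed; for a
closed trajectory of minimal period `N`, each `λ` with `λN + β₀ + ⋯ + β_{N−1} ∈ 2πℤ` yields an
eigenvalue `e^{−iλ}` with eigenfunction supported on the trajectory, and there are exactly `N`
such eigenvalues. -/
theorem elastic_eigenvalues_and_closed_trajectories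
    (M₀ : ℤ) (hM₀ : 1 ≤ M₀)
    (σ : Site → Equiv.Perm Chir) (α : Site → Chir → ℝ)
    (hA1 : ∀ x, x ∉ innerDom M₀ → elasticCoin σ α x = 1)
    (S Cop : H →L[ℂ] H) (hS : IsShiftOp S) (hCop : IsCoinOp Cop (elasticCoin σ α))
    (Uel : unitary (H →L[ℂ] H)) (hUel : (Uel : H →L[ℂ] H) = S.comp Cop)
    (q : ℤ → Site → Chir → Site) (p : ℤ → Site → Chir → Chir)
    (htraj : IsTrajectory Uel q p) :
    ((∃ (z : ℂ) (u : H), u ≠ 0 ∧ (Uel : H →L[ℂ] H) u = z • u) ↔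
      (∃ (y : Site) (j : Chir) (t₁ t₂ : ℤ),
        t₁ < t₂ ∧ q t₁ y j = q t₂ y j ∧ p t₁ y j = p t₂ y j)) ∧
    ∀ (y : Site) (j : Chir) (N : ℕ), 1 ≤ N →
      (q (N : ℤ) y j = y ∧ p (N : ℤ) y j = j) →
      (∀ m : ℕ, 0 < m → m < N → ¬(q (m : ℤ) y j = y ∧ p (m : ℤ) y j = j)) →
      ((∀ lam : ℝ,
          (∃ n : ℤ, lam * N + ∑ t ∈ Finset.range N, α (q (t : ℤ) y j) (p (t : ℤ) y j)
              = 2 * Real.pi * n) →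
          ∃ u : H, u ≠ 0 ∧ (Uel : H →L[ℂ] H) u = Complex.exp (-(Complex.I * (lam : ℂ))) • u ∧
            ∀ (x : Site) (k : Chir),
              (x, k) ∉ {w : Site × Chir | ∃ t : ℕ, t < N ∧ w = (q (t : ℤ) y j, p (t : ℤ) y j)} →
              u x k = 0) ∧
        Set.ncard {z : ℂ | ∃ lam : ℝ, z = Complex.exp (-(Complex.I * (lam : ℂ))) ∧
            ∃ n : ℤ, lam * N + ∑ t ∈ Finset.range N, α (q (t : ℤ) y j) (p (t : ℤ) y j)
              = 2 * Real.pi * n} = N) := by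
  classical
  constructor
  · constructor
    · rintro ⟨z, u, hu, heq⟩
      exact forward_closed htraj hu heq
    · rintro ⟨y, j, t₁, t₂, hlt, hq, hp⟩
      set w := q t₁ y j with hw
      set jw := p t₁ y j with hjw
      have hclosed : q (t₂ - t₁) w jw = w ∧ p (t₂ - t₁) w jw = jw := by
        have h1 := traj_add htraj (t₂ - t₁) t₁ y j
        rw [sub_add_cancel] at h1
        exact ⟨h1.1.symm.trans (hq.symm), h1.2.symm.trans (hp.symm)⟩
      have hex : ∃ m : ℕ, 0 < m ∧ q (m : ℤ) w jw = w ∧ p (m : ℤ) w jw = jw := by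
        refine ⟨(t₂ - t₁).toNat, by omega, ?_, ?_⟩ <;>
          rw [Int.toNat_of_nonneg (by omega : (0:ℤ) ≤ t₂ - t₁)]
        · exact hclosed.1
        · exact hclosed.2
      set N := Nat.find hex with hNdef
      have hspec := Nat.find_spec hex
      have hNpos : 1 ≤ N := hspec.1
      have hmin : ∀ m : ℕ, 0 < m → m < N → ¬(q (m : ℤ) w jw = w ∧ p (m : ℤ) w jw = jw) := by
        intro m hm0 hmN hcon
        exact Nat.find_min hex hmN ⟨hm0, hcon.1, hcon.2⟩
      set B : ℝ := ∑ t ∈ Finset.range N, α (q (t : ℤ) w jw) (p (t : ℤ) w jw) with hB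
      have hN0 : (N : ℝ) ≠ 0 := Nat.cast_ne_zero.mpr (by omega)
      have hlam : ∃ n : ℤ, (-B / N) * N + B = 2 * Real.pi * n :=
        ⟨0, by field_simp; simp⟩
      obtain ⟨u, hu0, heq, _⟩ := construct_eigen hS hCop hUel htraj w jw N hNpos
        ⟨hspec.2.1, hspec.2.2⟩ hmin (-B / N) hlam
      exact ⟨Complex.exp (-(Complex.I * ((-B / N : ℝ) : ℂ))), u, hu0, heq⟩
  · intro y j N hN hper hmin
    exact ⟨fun lam hlam => construct_eigen hS hCop hUel htraj y j N hN hper hmin lam hlam,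
      count_eigen N hN _⟩


end QWPaper
end
end
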